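/- arXiv:2601.16588 — 5 statements merged into one kernel-verified Lean document; each statement's English description precedes it below -/
import Mathlib

section
/- Let n be a positive integer and let M be a symmetric n×n integer matrix all of whose diagonal entries are even and whose determinant is odd. Then n is even, and det(M) ≡ (−1)^{n/2} (mod 4). -/
open Matrix
lemma dvd2_iff (x : ZMod 4) : 2 ∣ x ↔ (x = 0 ∨ x = 2) :=
  (by decide : ∀ x : ZMod 4, (∃ c, x = 2 * c) ↔ (x = 0 ∨ x = 2)) x
lemma sq_one (x : ZMod 4) (hx : ¬(2 ∣ x)) : x * x = 1 := by
  rw [dvd2_iff] at hx; revert x; decide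
lemma mul_even (x y : ZMod 4) (hx : 2 ∣ x) (hy : 2 ∣ y) : x * y = 0 := by
  rw [dvd2_iff] at hx hy; revert x y; decide
lemma cast_zero_iff (x : ZMod 4) : 2 ∣ x ↔ (ZMod.castHom (by norm_num : (2:ℕ) ∣ 4) (ZMod 2)) x = 0 := by
  rw [dvd2_iff]; revert x; decide

lemma key : ∀ n (M : Matrix (Fin n) (Fin n) (ZMod 4)), M.IsSymm → (∀ i, 2 ∣ M i i) →
    ¬(2 ∣ M.det) → Even n ∧ M.det = (-1) ^ (n / 2) := by
  intro n
  induction n using Nat.strong_induction_on with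
  | _ n ih =>
    match n with
    | 0 => exact fun M _ _ _ => ⟨Even.zero, by simp [Matrix.det_fin_zero]⟩
    | 1 => exact fun M _ hdiag hdet => absurd (by simpa [Matrix.det_fin_one] using hdiag 0) hdet
    | (m+2) =>
      intro M hsymm hdiag hdet
      -- find an odd entry in row 0
      have hrow : ¬ ∀ j, 2 ∣ M 0 j := by
        intro h
        apply hdet
        rw [cast_zero_iff, RingHom.map_det]
        exact Matrix.det_eq_zero_of_row_eq_zero 0
          (fun j => by simpa using (cast_zero_iff _).mp (h j))
      push_neg at hrow
      obtain ⟨j, hj⟩ := hrow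
      have hj0 : j ≠ 0 := by rintro rfl; exact hj (hdiag 0)
      -- reindex so that positions 0 and j are the first block
      have hmn : 2 + m = m + 2 := by omega
      let e : Fin 2 ⊕ Fin m ≃ Fin (m + 2) :=
        (finSumFinEquiv.trans (finCongr hmn)).trans (Equiv.swap 1 j)
      have he0 : e (Sum.inl 0) = 0 := by
        show Equiv.swap 1 j (finCongr hmn (finSumFinEquiv (Sum.inl (0 : Fin 2)))) = 0
        rw [finSumFinEquiv_apply_left]
        rw [show (finCongr hmn (Fin.castAdd m (0 : Fin 2))) = (0 : Fin (m+2)) by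
          apply Fin.ext; simp]
        exact Equiv.swap_apply_of_ne_of_ne (by simp) (Ne.symm hj0)
      have he1 : e (Sum.inl 1) = j := by
        show Equiv.swap 1 j (finCongr hmn (finSumFinEquiv (Sum.inl (1 : Fin 2)))) = j
        rw [finSumFinEquiv_apply_left]
        rw [show (finCongr hmn (Fin.castAdd m (1 : Fin 2))) = (1 : Fin (m+2)) by
          apply Fin.ext; simp]
        exact Equiv.swap_apply_left 1 j
      set N := M.submatrix e e with hNdef
      have hNdet : N.det = M.det := Matrix.det_submatrix_equiv_self e M
      have hNsymm : N.IsSymm := by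
        unfold Matrix.IsSymm
        rw [hNdef, Matrix.transpose_submatrix, hsymm]
      set A := N.toBlocks₁₁ with hAdef
      set B := N.toBlocks₁₂ with hBdef
      set C := N.toBlocks₂₁ with hCdef
      set D := N.toBlocks₂₂ with hDdef
      have hN : Matrix.fromBlocks A B C D = N := Matrix.fromBlocks_toBlocks N
      set a := A 0 0 with ha
      set b := A 0 1 with hb
      set d := A 1 1 with hd
      have hA10 : A 1 0 = b := hNsymm.apply (Sum.inl 0) (Sum.inl 1)
      have hA : A = !![a, b; b, d] := by
        ext i k
        fin_cases i <;> fin_cases k <;> simp [ha, hb, hd, hA10]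
      have hae : 2 ∣ a := hdiag _
      have hde : 2 ∣ d := hdiag _
      have hbu : ¬ 2 ∣ b := by
        have : b = M 0 j := by rw [hb]; show M (e (Sum.inl 0)) (e (Sum.inl 1)) = M 0 j; rw [he0, he1]
        rwa [this]
      have had : a * d = 0 := mul_even a d hae hde
      have hbb : b * b = 1 := sq_one b hbu
      set A' : Matrix (Fin 2) (Fin 2) (ZMod 4) := !![-d, b; b, -a] with hA'
      have hright : A * A' = 1 := by
        rw [hA, hA']
        ext i k
        fin_cases i <;> fin_cases k <;>
          simp [Matrix.mul_apply, Fin.sum_univ_two]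
        all_goals
          first
          | linear_combination hbb - had
          | linear_combination had - hbb
          | ring
      have : Invertible A := invertibleOfRightInverse A A' hright
      have hAinv : ⅟A = A' := by rw [Matrix.invOf_eq_nonsing_inv, Matrix.inv_eq_right_inv hright]
      have hdetA : A.det = -1 := by
        rw [hA, Matrix.det_fin_two_of, had, hbb]; ring
      set S := D - C * ⅟A * B with hS
      have hMS : M.det = -S.det := by
        rw [← hNdet, ← hN, Matrix.det_fromBlocks₁₁, hdetA, ← hS]; ring
      -- C = Bᵀ
      have hCB : ∀ i k, C i k = B k i := fun i k => hNsymm.apply (Sum.inl k) (Sum.inr i)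
      have hSsymm : S.IsSymm := by
        unfold Matrix.IsSymm
        rw [hS, hAinv]
        have hCt : C.transpose = B := by ext i k; simp [Matrix.transpose_apply, hCB]
        have hBt : B.transpose = C := by ext i k; simp [Matrix.transpose_apply, hCB]
        have hDt : D.transpose = D := by
          ext i k; exact hNsymm.apply (Sum.inr i) (Sum.inr k)
        have hA't : A'.transpose = A' := by
          rw [hA']; ext i k; fin_cases i <;> fin_cases k <;> simp
        rw [Matrix.transpose_sub, hDt, Matrix.transpose_mul, Matrix.transpose_mul, hBt, hA't,
          Matrix.mul_assoc, hCt]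
      have hSdiag : ∀ i, 2 ∣ S i i := by
        intro i
        rw [hS, hAinv]
        have hexp : (C * A' * B) i i =
            (C i 0 * (-d) + C i 1 * b) * B 0 i + (C i 0 * b + C i 1 * (-a)) * B 1 i := by
          simp [Matrix.mul_apply, Fin.sum_univ_two, hA']
        obtain ⟨a', ha'⟩ := hae
        obtain ⟨d', hd'⟩ := hde
        have h2 : 2 ∣ (C * A' * B) i i := by
          rw [hexp, hCB, hCB, ha', hd']
          exact ⟨-(d' * B 0 i * B 0 i) + b * B 0 i * B 1 i - a' * B 1 i * B 1 i, by ring⟩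
        exact dvd_sub (hdiag _) h2
      have hSdet : ¬ 2 ∣ S.det := by
        intro h
        exact hdet (by rw [hMS]; exact h.neg_right)
      obtain ⟨hev, hdS⟩ := ih m (by omega) S hSsymm hSdiag hSdet
      obtain ⟨r, hr⟩ := hev
      refine ⟨⟨r + 1, by omega⟩, ?_⟩
      rw [hMS, hdS, show (m + 2) / 2 = m / 2 + 1 by omega, pow_succ]
      ring

/-- Let `n` be a positive integer and `M` a symmetric `n × n` integer matrix all of whose
diagonal entries are even and whose determinant is odd. Then `n` is even and
`det M ≡ (-1)^(n/2) (mod 4)`. -/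
theorem stmt_0 (n : ℕ) (hn : 0 < n) (M : Matrix (Fin n) (Fin n) ℤ)
    (hsymm : M.IsSymm) (hdiag : ∀ i, Even (M i i)) (hdet : Odd M.det) :
    Even n ∧ Int.ModEq 4 M.det ((-1) ^ (n / 2)) := by
  set f := Int.castRingHom (ZMod 4) with hf
  set M4 := M.map f with hM4
  have hsymm4 : M4.IsSymm := by
    unfold Matrix.IsSymm
    rw [hM4, ← Matrix.transpose_map, hsymm]
  have hdiag4 : ∀ i, 2 ∣ M4 i i := by
    intro i
    obtain ⟨c, hc⟩ := hdiag i
    refine ⟨(c : ZMod 4), ?_⟩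
    have : M4 i i = ((c + c : ℤ) : ZMod 4) := by rw [hM4, Matrix.map_apply, hc]; rfl
    rw [this]; push_cast; ring
  have hdet4eq : M4.det = ((M.det : ℤ) : ZMod 4) := by
    rw [hM4]; exact (RingHom.map_det f M).symm
  have hdet4 : ¬ 2 ∣ M4.det := by
    obtain ⟨k, hk⟩ := hdet
    rintro ⟨c, hc⟩
    rw [hdet4eq, hk] at hc
    push_cast at hc
    have h1 : (2 : ZMod 4) * (c - (k : ZMod 4)) = 1 := by linear_combination -hc
    exact absurd h1 ((by decide : ∀ x : ZMod 4, ¬ 2 * x = 1) _)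
  obtain ⟨hev, hdq⟩ := key n M4 hsymm4 hdiag4 hdet4
  refine ⟨hev, ?_⟩
  have hcast : ((M.det : ℤ) : ZMod 4) = (((-1 : ℤ) ^ (n / 2) : ℤ) : ZMod 4) := by
    rw [← hdet4eq, hdq]; push_cast; ring
  have := (ZMod.intCast_eq_intCast_iff _ _ 4).mp hcast
  simpa using this
end

section
/- Let p be a prime and let B be an n×n rational matrix such that ord_p(B_{ij}) ≥ 0 for all i ≠ j and ord_p(B_{ii}) ≥ −g_i for non-negative integers g_1,…,g_n. Let adj(B) denote the adjugate matrix of B. Then for all i ≠ j, the (i,j)-entry of adj(B) satisfies ord_p(adj(B)_{ij}) ≥ −(g_1+…+g_n) + g_i + g_j, and for each i, the diagonal entry satisfies ord_p(adj(B)_{ii}) ≥ −(g_1+…+g_n) + g_i. -/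
open Matrix

/-- The `p`-adic valuation on `ℚ`, with `ordp p 0 = ⊤`. -/
noncomputable def ordp (p : ℕ) (z : ℚ) : WithTop ℤ :=
  if z = 0 then ⊤ else (padicValRat p z : WithTop ℤ)

section lemmas

variable {p : ℕ} (hp : p.Prime)

lemma ordp_zero : ordp p 0 = ⊤ := by simp [ordp]

lemma ordp_one : ordp p 1 = 0 := by simp [ordp, padicValRat.one]

lemma ordp_neg (x : ℚ) : ordp p (-x) = ordp p x := by
  by_cases hx : x = 0
  · simp [hx]
  · simp [ordp, hx, padicValRat.neg]

include hp in
lemma ordp_mul (x y : ℚ) : ordp p (x * y) = ordp p x + ordp p y := by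
  haveI : Fact p.Prime := ⟨hp⟩
  by_cases hx : x = 0
  · simp [hx, ordp]
  by_cases hy : y = 0
  · simp [hy, ordp]
  simp only [ordp, mul_eq_zero, hx, hy, if_neg, or_self, if_false]
  rw [padicValRat.mul hx hy]
  push_cast
  rfl

include hp in
lemma min_le_ordp_add (x y : ℚ) : min (ordp p x) (ordp p y) ≤ ordp p (x + y) := by
  haveI : Fact p.Prime := ⟨hp⟩
  by_cases hxy : x + y = 0
  · simp [hxy, ordp]
  by_cases hx : x = 0
  · rw [hx, ordp_zero, zero_add]; exact min_le_right _ _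
  by_cases hy : y = 0
  · rw [hy, ordp_zero, add_zero]; exact min_le_left _ _
  simp only [ordp, hx, hy, hxy, if_neg, if_false]
  have := padicValRat.min_le_padicValRat_add (p := p) hxy
  rw [← WithTop.coe_min]
  exact_mod_cast this

include hp in
lemma le_ordp_sum {ι : Type*} (s : Finset ι) (f : ι → ℚ) (c : WithTop ℤ)
    (h : ∀ k ∈ s, c ≤ ordp p (f k)) : c ≤ ordp p (∑ k ∈ s, f k) := by
  classical
  induction s using Finset.cons_induction with
  | empty => simp [ordp_zero]
  | cons a s ha ih =>
    rw [Finset.sum_cons]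
    refine le_trans ?_ (min_le_ordp_add hp _ _)
    exact le_min (h a (Finset.mem_cons_self a s))
      (ih fun k hk => h k (Finset.mem_cons_of_mem hk))

include hp in
lemma sum_le_ordp_prod {ι : Type*} (s : Finset ι) (f : ι → ℚ) (c : ι → ℤ)
    (h : ∀ k ∈ s, (c k : WithTop ℤ) ≤ ordp p (f k)) :
    ((∑ k ∈ s, c k : ℤ) : WithTop ℤ) ≤ ordp p (∏ k ∈ s, f k) := by
  classical
  induction s using Finset.cons_induction with
  | empty => simp [ordp_one]
  | cons a s ha ih =>
    rw [Finset.sum_cons, Finset.prod_cons, ordp_mul hp, WithTop.coe_add]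
    exact add_le_add (h a (Finset.mem_cons_self a s))
      (ih fun k hk => h k (Finset.mem_cons_of_mem hk))

omit hp in
lemma ordp_sign_smul {m : ℕ} (σ : Equiv.Perm (Fin m)) (x : ℚ) :
    ordp p (Equiv.Perm.sign σ • x) = ordp p x := by
  rcases Int.units_eq_one_or (Equiv.Perm.sign σ) with h | h <;>
    simp [h, Units.smul_def, ordp_neg]

end lemmas

/-- Let `p` be a prime and `B` an `n × n` rational matrix with `ord_p(B i j) ≥ 0` for `i ≠ j`
and `ord_p(B i i) ≥ -g i` for non-negative integers `g i`. Then the adjugate of `B` satisfies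
`ord_p(adj(B) i j) ≥ -(g 1 + … + g n) + g i + g j` for `i ≠ j` and
`ord_p(adj(B) i i) ≥ -(g 1 + … + g n) + g i`. -/
theorem stmt_10 (p : ℕ) (hp : p.Prime) (n : ℕ) (B : Matrix (Fin n) (Fin n) ℚ)
    (g : Fin n → ℕ)
    (hoff : ∀ i j : Fin n, i ≠ j → (0 : WithTop ℤ) ≤ ordp p (B i j))
    (hdiag : ∀ i : Fin n, ((-(g i : ℤ) : ℤ) : WithTop ℤ) ≤ ordp p (B i i)) :
    (∀ i j : Fin n, i ≠ j →
      (((-(∑ l : Fin n, (g l : ℤ)) + (g i : ℤ) + (g j : ℤ)) : ℤ) : WithTop ℤ) ≤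
        ordp p (B.adjugate i j)) ∧
    (∀ i : Fin n,
      (((-(∑ l : Fin n, (g l : ℤ)) + (g i : ℤ)) : ℤ) : WithTop ℤ) ≤
        ordp p (B.adjugate i i)) := by
  classical
  have key : ∀ i j : Fin n,
      ((-(∑ k ∈ Finset.univ \ {i, j}, (g k : ℤ)) : ℤ) : WithTop ℤ) ≤ ordp p (B.adjugate i j) := by
    intro i j
    rw [Matrix.adjugate_apply, Matrix.det_apply]
    apply le_ordp_sum hp
    intro σ _
    rw [ordp_sign_smul]
    set M := B.updateRow j (Pi.single i (1 : ℚ)) with hM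
    by_cases hσ : σ i = j
    · -- each factor bound
      set c : Fin n → ℤ := fun k => if σ k = k ∧ k ≠ i ∧ k ≠ j then -(g k : ℤ) else 0 with hc
      have hfac : ∀ k ∈ (Finset.univ : Finset (Fin n)),
          ((c k : ℤ) : WithTop ℤ) ≤ ordp p (M (σ k) k) := by
        intro k _
        by_cases hk : k = i
        · subst hk
          have : M (σ k) k = 1 := by
            rw [hM, hσ, Matrix.updateRow_self, Pi.single_eq_same]
          rw [this, ordp_one, hc]
          simp
        · have hrow : σ k ≠ j := fun h => hk (σ.injective (h.trans hσ.symm))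
          have hMk : M (σ k) k = B (σ k) k := by
            rw [hM]; exact congrFun (Matrix.updateRow_ne hrow) k
          rw [hMk]
          by_cases hfix : σ k = k
          · have hkj : k ≠ j := by
              intro h; subst h
              exact hk (σ.injective (hfix.trans hσ.symm))
            rw [hfix]
            have : c k = -(g k : ℤ) := by simp [hc, hfix, hk, hkj]
            rw [this]
            exact hdiag k
          · have : c k = 0 := by simp [hc, hfix]
            rw [this]
            exact hoff _ _ hfix
      refine le_trans ?_ (sum_le_ordp_prod hp Finset.univ _ c hfac)
      rw [WithTop.coe_le_coe]
      have h1 : -(∑ k ∈ Finset.univ \ ({i, j} : Finset (Fin n)), (g k : ℤ)) =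
          ∑ k : Fin n, (if k ∈ Finset.univ \ ({i, j} : Finset (Fin n)) then -(g k : ℤ) else 0) := by
        rw [Finset.sum_ite_mem, Finset.univ_inter, ← Finset.sum_neg_distrib]
      rw [h1]
      refine Finset.sum_le_sum fun k _ => ?_
      by_cases hks : k ∈ Finset.univ \ ({i, j} : Finset (Fin n))
      · simp only [hks, if_true, hc]
        split <;> simp
      · simp only [hks, if_false, hc]
        have : ¬(σ k = k ∧ k ≠ i ∧ k ≠ j) := by
          simp only [Finset.mem_sdiff, Finset.mem_univ, true_and, Finset.mem_insert,
            Finset.mem_singleton, not_not] at hks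
          tauto
        simp [this]
    · -- a zero factor
      have h0 : M (σ (σ.symm j)) (σ.symm j) = 0 := by
        rw [Equiv.apply_symm_apply, hM, Matrix.updateRow_self]
        have : σ.symm j ≠ i := fun h => hσ (by rw [← h, Equiv.apply_symm_apply])
        simp [Pi.single_eq_of_ne this]
      have hz : (∏ k : Fin n, M (σ k) k) = 0 :=
        Finset.prod_eq_zero (Finset.mem_univ (σ.symm j)) h0
      rw [hz, ordp_zero]
      exact le_top
  constructor
  · intro i j hij
    have hsum : -(∑ k ∈ Finset.univ \ ({i, j} : Finset (Fin n)), (g k : ℤ)) =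
        -(∑ l : Fin n, (g l : ℤ)) + (g i : ℤ) + (g j : ℤ) := by
      rw [Finset.sum_sdiff_eq_sub (Finset.subset_univ _), Finset.sum_pair hij]
      ring
    rw [← hsum]
    exact key i j
  · intro i
    have hsum : -(∑ k ∈ Finset.univ \ ({i, i} : Finset (Fin n)), (g k : ℤ)) =
        -(∑ l : Fin n, (g l : ℤ)) + (g i : ℤ) := by
      rw [Finset.pair_eq_singleton i, Finset.sum_sdiff_eq_sub (Finset.subset_univ _),
        Finset.sum_singleton]
      ring
    rw [← hsum]
    exact key i i
end

section
/- Let p be an odd prime and let M be a symmetric n×n integer matrix. Let d be the dimension over 𝔽_p of the kernel of the reduction of M modulo p. Then there exists an n×n integer matrix T with det T = ±1 such that T·M·Tᵀ has the following shape: its upper left (n−d)×(n−d) submatrix N has determinant not divisible by p, and all entries of T·M·Tᵀ outside of N are divisible by p (i.e., modulo p, T·M·Tᵀ equals the block sum of N and a d×d zero matrix). -/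
open Matrix

/-- The dimension over `𝔽_p` of the kernel of the reduction of an integer matrix modulo `p`. -/
noncomputable def kerDimModP (p : ℕ) {n : ℕ} (M : Matrix (Fin n) (Fin n) ℤ) : ℕ :=
  Module.finrank (ZMod p)
    (LinearMap.ker (Matrix.mulVecLin (M.map (Int.cast : ℤ → ZMod p))))

/-- The upper left `r × r` submatrix of an `n × n` matrix, for `r ≤ n`. -/
def upperLeft {n : ℕ} (M : Matrix (Fin n) (Fin n) ℤ) (r : ℕ) (h : r ≤ n) :
    Matrix (Fin r) (Fin r) ℤ :=
  M.submatrix (Fin.castLE h) (Fin.castLE h)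

variable {p n : ℕ} [Fact p.Prime]

/-- Coordinatewise reduction mod `p` as a `ℤ`-linear map. -/
def redMap (p n : ℕ) : (Fin n → ℤ) →ₗ[ℤ] (Fin n → ZMod p) where
  toFun v := fun i => ((v i : ℤ) : ZMod p)
  map_add' x y := by funext i; simp
  map_smul' z v := by
    funext i
    simp [zsmul_eq_mul]

theorem exists_unimodular_lift (p n : ℕ) [Fact p.Prime]
    (K' : Submodule (ZMod p) (Fin n → ZMod p)) (d : ℕ)
    (hd : d = Module.finrank (ZMod p) K') :
    d ≤ n ∧ ∃ T : Matrix (Fin n) (Fin n) ℤ, (T.det = 1 ∨ T.det = -1) ∧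
      ∀ i : Fin n, n - d ≤ (i : ℕ) → (fun j => ((T i j : ℤ) : ZMod p)) ∈ K' := by
  classical
  have hp : (p : ℤ) ≠ 0 := by exact_mod_cast (Fact.out : p.Prime).ne_zero
  set F := ZMod p
  set π := redMap p n with hπ
  set L : Submodule ℤ (Fin n → ℤ) := (K'.restrictScalars ℤ).comap π with hL
  obtain ⟨m, b, bL, f, a, hsnf⟩ := L.smithNormalForm (Pi.basisFun ℤ (Fin n))
  -- m = n
  haveI : Module.Finite ℤ L := Module.Finite.iff_fg.mpr (IsNoetherian.noetherian L)
  have hmn : n = m := by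
    have h1 : Module.finrank ℤ L = m := by
      rw [Module.finrank_eq_card_basis bL, Fintype.card_fin]
    have h2 : Module.finrank ℤ (Fin n → ℤ) = n := by
      rw [Module.finrank_pi, Fintype.card_fin]
    have hle : Module.finrank ℤ L ≤ n := le_trans (Submodule.finrank_le L) (le_of_eq h2)
    -- lower bound: p • x ∈ L for all x
    have hmem : ∀ x : Fin n → ℤ, (p : ℤ) • x ∈ L := by
      intro x
      simp only [hL, Submodule.mem_comap, Submodule.restrictScalars_mem]
      have : π ((p : ℤ) • x) = 0 := by
        rw [LinearMap.map_smul]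
        funext i
        simp [ZMod.natCast_self]
      rw [this]; exact K'.zero_mem
    let j : (Fin n → ℤ) →ₗ[ℤ] L :=
      { toFun := fun x => ⟨(p : ℤ) • x, hmem x⟩
        map_add' := fun x y => by ext i; simp [smul_add]; ring
        map_smul' := fun z x => by ext i; simp [smul_comm]; ring }
    have hjinj : Function.Injective j := by
      intro x y hxy
      have : (p : ℤ) • x = (p : ℤ) • y := congrArg Subtype.val hxy
      exact smul_right_injective _ hp this
    have hge : n ≤ Module.finrank ℤ L := by
      have := LinearMap.finrank_le_finrank_of_injective hjinj
      rwa [h2] at this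
    omega
  subst hmn
  -- membership of reduced basis vectors
  have hkey : ∀ i : Fin n, ¬ (p : ℤ) ∣ a i → π (b (f i)) ∈ K' := by
    intro i hi
    have h1 : (a i) • b (f i) ∈ L := hsnf i ▸ (bL i).2
    have h2 : ((a i : ℤ) : F) • π (b (f i)) ∈ K' := by
      have h3 : π (a i • b (f i)) ∈ K' := by
        have := h1
        simpa only [hL, Submodule.mem_comap, Submodule.restrictScalars_mem] using this
      rw [LinearMap.map_smul, ← Int.cast_smul_eq_zsmul F] at h3
      exact h3
    have hu : ((a i : ℤ) : F) ≠ 0 := by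
      rwa [Ne, ZMod.intCast_zmod_eq_zero_iff_dvd]
    have := K'.smul_mem (((a i : ℤ) : F))⁻¹ h2
    rwa [smul_smul, inv_mul_cancel₀ hu, one_smul] at this
  -- reductions of basis b form a basis of F^n
  have hBinv : Invertible (((Pi.basisFun ℤ (Fin n)).toMatrix b).map (Int.cast : ℤ → F)) := by
    haveI := (Pi.basisFun ℤ (Fin n)).invertibleToMatrix b
    exact Invertible.map ((Int.castRingHom F).mapMatrix) _
  let bF : Module.Basis (Fin n) F (Fin n → F) :=
    (Pi.basisFun F (Fin n)).map (Matrix.toLinearEquiv' _ hBinv)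
  have hbF : ∀ j, bF j = π (b j) := by
    intro j
    funext i
    simp only [bF, Module.Basis.map_apply, Pi.basisFun_apply]
    show ((((Pi.basisFun ℤ (Fin n)).toMatrix b).map (Int.cast : ℤ → F)) *ᵥ Pi.single j 1) i
      = π (b j) i
    rw [Matrix.mulVec_single_one]
    simp only [Matrix.col_apply, Matrix.map_apply, Module.Basis.toMatrix_apply, Pi.basisFun_repr, mul_one]
    rfl
  -- the set of indices with a i not divisible by p
  set s : Finset (Fin n) := Finset.univ.filter (fun i => ¬ (p : ℤ) ∣ a i) with hs
  -- the family indexed by s is a basis of K'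
  have hGmem : ∀ i : s, π (b (f i)) ∈ K' := fun i =>
    hkey i (Finset.mem_filter.mp i.2).2
  let G : s → K' := fun i => ⟨π (b (f i)), hGmem i⟩
  have hGind : LinearIndependent F G := by
    have hind : LinearIndependent F (fun i : s => π (b (f i))) := by
      have : (fun i : s => π (b (f i))) = bF ∘ (fun i : s => f i) := by
        funext i; rw [Function.comp_apply, hbF]
      rw [this]
      exact bF.linearIndependent.comp _ (f.injective.comp Subtype.val_injective)
    exact hind.of_comp K'.subtype
  have hGspan : Submodule.span F (Set.range G) = ⊤ := by
    apply Submodule.map_injective_of_injective K'.injective_subtype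
    rw [Submodule.map_span, Submodule.map_top, Submodule.range_subtype]
    have hrange : K'.subtype '' (Set.range G) = Set.range (fun i : s => π (b (f i))) := by
      ext x
      simp only [Set.mem_image, Set.mem_range]
      constructor
      · rintro ⟨y, ⟨i, rfl⟩, rfl⟩; exact ⟨i, rfl⟩
      · rintro ⟨i, rfl⟩; exact ⟨G i, ⟨i, rfl⟩, rfl⟩
    rw [hrange]
    apply le_antisymm
    · rw [Submodule.span_le]
      rintro x ⟨i, rfl⟩
      exact hGmem i
    · -- K' ≤ span
      intro x hx
      -- lift x to an integer vector in L
      set v : Fin n → ℤ := fun j => ((x j).val : ℤ) with hv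
      have hπv : π v = x := by
        funext i
        show (((x i).val : ℤ) : ZMod p) = x i
        push_cast
        simp [ZMod.natCast_val, ZMod.cast_id]
      have hvL : v ∈ L := by
        simp only [hL, Submodule.mem_comap, Submodule.restrictScalars_mem, hπv]
        exact hx
      have hsum := bL.sum_repr ⟨v, hvL⟩
      have hv' : v = ∑ i : Fin n, (bL.repr ⟨v, hvL⟩ i) • ((a i) • b (f i)) := by
        have h0 := congrArg (Subtype.val) hsum
        simp only [Submodule.coe_sum, SetLike.val_smul, hsnf] at h0
        exact h0.symm
      have hx' : x = ∑ i : Fin n, (((bL.repr ⟨v, hvL⟩ i * a i : ℤ)) : F) • π (b (f i)) := by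
        conv_lhs => rw [← hπv, hv']
        rw [map_sum]
        refine Finset.sum_congr rfl (fun i _ => ?_)
        rw [smul_smul, LinearMap.map_smul, ← Int.cast_smul_eq_zsmul F]
      rw [hx']
      apply Submodule.sum_mem
      intro i _
      by_cases hdvd : (p : ℤ) ∣ a i
      · have : ((bL.repr ⟨v, hvL⟩ i * a i : ℤ) : F) = 0 := by
          rw [ZMod.intCast_zmod_eq_zero_iff_dvd]
          exact Dvd.dvd.mul_left hdvd _
        rw [this, zero_smul]
        exact Submodule.zero_mem _
      · apply Submodule.smul_mem
        apply Submodule.subset_span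
        exact ⟨⟨i, by simp [hs, hdvd]⟩, rfl⟩
  let bK : Module.Basis s F K' := Module.Basis.mk hGind (by rw [hGspan])
  have hcard : s.card = d := by
    rw [hd, Module.finrank_eq_card_basis bK, Fintype.card_coe]
  have hdn : d ≤ n := by
    rw [← hcard]
    exact le_trans (Finset.card_le_univ s) (by simp)
  refine ⟨hdn, ?_⟩
  set r := n - d with hr
  have hrd : r + d = n := by omega
  set s' : Finset (Fin n) := s.map f with hs'
  have hs'card : s'.card = d := by rw [Finset.card_map, hcard]
  have hcard1 : Fintype.card {x : Fin n // x ∈ s'} = d := by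
    rw [Fintype.card_coe, hs'card]
  have hcard2 : Fintype.card {x : Fin n // ¬ x ∈ s'} = r := by
    rw [Fintype.card_subtype_compl, hcard1, Fintype.card_fin]
  let e_d : Fin d ≃ {x : Fin n // x ∈ s'} := (Fintype.equivFinOfCardEq hcard1).symm
  let e_r : Fin r ≃ {x : Fin n // ¬ x ∈ s'} := (Fintype.equivFinOfCardEq hcard2).symm
  let σ : Fin n ≃ Fin n :=
    ((finCongr hrd.symm).trans (finSumFinEquiv.symm)).trans
      (((e_r.sumCongr e_d).trans (Equiv.sumComm _ _)).trans (Equiv.sumCompl (· ∈ s')))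
  have hσ : ∀ i : Fin n, r ≤ (i : ℕ) → σ i ∈ s' := by
    intro i hi
    have hlt : (i : ℕ) - r < d := by omega
    have h1 : (finCongr hrd.symm) i = Fin.natAdd r ⟨(i : ℕ) - r, hlt⟩ := by
      apply Fin.ext
      simp only [finCongr_apply, Fin.coe_cast, Fin.coe_natAdd]
      omega
    have h2 : σ i = ↑(e_d ⟨(i : ℕ) - r, hlt⟩) := by
      simp only [σ, Equiv.trans_apply, h1, finSumFinEquiv_symm_apply_natAdd,
        Equiv.sumCongr_apply, Sum.map_inr, Equiv.sumComm_apply, Sum.swap_inr,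
        Equiv.sumCompl_apply_inl]
    rw [h2]
    exact (e_d _).2
  refine ⟨Matrix.of (fun i j => b (σ i) j), ?_, ?_⟩
  · have hT : (Matrix.of (fun i j => b (σ i) j))ᵀ
        = (Pi.basisFun ℤ (Fin n)).toMatrix (b.reindex σ.symm) := by
      ext i j
      simp [Module.Basis.toMatrix_apply, Module.Basis.reindex_apply]
    haveI := (Pi.basisFun ℤ (Fin n)).invertibleToMatrix (b.reindex σ.symm)
    have hu : IsUnit (Matrix.of (fun i j => b (σ i) j)).det := by
      rw [← Matrix.det_transpose, hT]
      exact Matrix.isUnit_det_of_invertible _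
    exact Int.isUnit_iff.mp hu
  · intro i hi
    obtain ⟨i₀, hi₀, hfi⟩ := Finset.mem_map.mp (hσ i hi)
    have h2 : π (b (f i₀)) ∈ K' := hkey i₀ (Finset.mem_filter.mp hi₀).2
    rw [hfi] at h2
    exact h2

/-- Interleaving map putting a vector of length `r` on the first coordinates and one of
length `d` on the rest. -/
def interleave (F : Type*) [Semiring F] (r d n : ℕ) (hrd : r + d = n) :
    ((Fin r → F) × (Fin d → F)) →ₗ[F] (Fin n → F) where
  toFun x := fun i => if h : (i : ℕ) < r then x.1 ⟨i, h⟩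
    else x.2 ⟨(i : ℕ) - r, by have := i.isLt; omega⟩
  map_add' x y := by funext i; by_cases h : (i : ℕ) < r <;> simp [h]
  map_smul' c x := by funext i; by_cases h : (i : ℕ) < r <;> simp [h]

lemma interleave_apply₁ {F : Type*} [Semiring F] {r d n : ℕ} (hrd : r + d = n)
    (x : (Fin r → F) × (Fin d → F)) (j : Fin r) :
    interleave F r d n hrd x ⟨(j : ℕ), by omega⟩ = x.1 j := by
  show dite _ _ _ = _
  rw [dif_pos j.isLt]

lemma interleave_apply₂ {F : Type*} [Semiring F] {r d n : ℕ} (hrd : r + d = n)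
    (x : (Fin r → F) × (Fin d → F)) (j : Fin d) :
    interleave F r d n hrd x ⟨r + (j : ℕ), by omega⟩ = x.2 j := by
  show dite _ _ _ = _
  rw [dif_neg (by simp only [Fin.val_mk]; omega)]
  exact congrArg x.2 (Fin.ext (by simp))

lemma interleave_injective {F : Type*} [Semiring F] {r d n : ℕ} (hrd : r + d = n) :
    Function.Injective (interleave F r d n hrd) := by
  intro x y hxy
  refine Prod.ext (funext fun j => ?_) (funext fun j => ?_)
  · rw [← interleave_apply₁ hrd x j, ← interleave_apply₁ hrd y j, hxy]
  · rw [← interleave_apply₂ hrd x j, ← interleave_apply₂ hrd y j, hxy]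

lemma sum_split {F : Type*} [AddCommMonoid F] {r n : ℕ} (hrn : r ≤ n) (f : Fin n → F)
    (hf : ∀ j : Fin n, r ≤ (j : ℕ) → f j = 0) :
    ∑ j, f j = ∑ j : Fin r, f (Fin.castLE hrn j) := by
  classical
  have h1 : ∑ j : Fin r, f (Fin.castLE hrn j)
      = ∑ j ∈ Finset.univ.map (Fin.castLEEmb hrn), f j := by rw [Finset.sum_map]; rfl
  rw [h1]
  refine (Finset.sum_subset (Finset.subset_univ _) ?_).symm
  intro x _ hx
  apply hf
  by_contra hlt
  push_neg at hlt
  exact hx (Finset.mem_map.mpr ⟨⟨(x : ℕ), hlt⟩, Finset.mem_univ _, Fin.ext rfl⟩)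

lemma interleave_applyA {F : Type*} [Semiring F] {r d n : ℕ} (hrd : r + d = n)
    (x : (Fin r → F) × (Fin d → F)) (i : Fin n) (hi : (i : ℕ) < r) :
    interleave F r d n hrd x i = x.1 ⟨(i : ℕ), hi⟩ := by
  show dite _ _ _ = _
  rw [dif_pos hi]


/-- Let `p` be an odd prime and `M` a symmetric `n × n` integer matrix, and let `d` be the
dimension of the kernel of `M` modulo `p`. Then there is a unimodular integer matrix `T` such
that the upper left `(n-d) × (n-d)` submatrix `N` of `T * M * Tᵀ` has determinant not divisible
by `p`, while all entries of `T * M * Tᵀ` outside of `N` are divisible by `p`. -/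
theorem stmt_12 (p n : ℕ) [Fact p.Prime] (hp2 : p ≠ 2)
    (M : Matrix (Fin n) (Fin n) ℤ) (hsymm : M.IsSymm)
    (d : ℕ) (hd : d = kerDimModP p M) :
    d ≤ n ∧
    ∃ T : Matrix (Fin n) (Fin n) ℤ, (T.det = 1 ∨ T.det = -1) ∧
      ¬ (p : ℤ) ∣ (upperLeft (T * M * Tᵀ) (n - d) (Nat.sub_le n d)).det ∧
      ∀ i j : Fin n, (n - d ≤ (i : ℕ) ∨ n - d ≤ (j : ℕ)) → (p : ℤ) ∣ (T * M * Tᵀ) i j := by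

  classical
  obtain ⟨hdn, T, hdet, hrows⟩ := exists_unimodular_lift p n
    (LinearMap.ker (Matrix.mulVecLin (M.map (Int.cast : ℤ → ZMod p)))) d hd
  set F := ZMod p with hF
  set Mb := M.map (Int.cast : ℤ → F) with hMb
  set Tb := T.map (Int.cast : ℤ → F) with hTb
  have hcast : (Int.cast : ℤ → F) = ⇑(Int.castRingHom F) := rfl
  have hMbs : Mb.IsSymm := hsymm.map _
  have hmap : (T * M * Tᵀ).map (Int.cast : ℤ → F) = Tb * Mb * Tbᵀ := by
    rw [hTb, hMb, hcast, Matrix.map_mul, Matrix.map_mul, Matrix.transpose_map]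
  have hrn : n - d ≤ n := Nat.sub_le n d
  -- rows with index ≥ n - d of Tb * Mb vanish
  have hTM : ∀ i : Fin n, n - d ≤ (i : ℕ) → ∀ k, (Tb * Mb) i k = 0 := by
    intro i hi k
    have h0 := hrows i hi
    rw [LinearMap.mem_ker] at h0
    have h0k := congrFun h0 k
    rw [Matrix.mul_apply]
    have hterm : ∀ l, Tb i l * Mb l k = Mb k l * Tb i l := by
      intro l
      rw [mul_comm, hMbs.apply k l]
    rw [Finset.sum_congr rfl (fun l _ => hterm l)]
    exact h0k
  have hGrow : ∀ i j : Fin n, n - d ≤ (i : ℕ) → (Tb * Mb * Tbᵀ) i j = 0 := by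
    intro i j hi
    rw [Matrix.mul_apply]
    exact Finset.sum_eq_zero fun k _ => by rw [hTM i hi k, zero_mul]
  have hGsym : ∀ i j : Fin n, (Tb * Mb * Tbᵀ) i j = (Tb * Mb * Tbᵀ) j i := by
    intro i j
    have h : (Tb * Mb * Tbᵀ)ᵀ = Tb * Mb * Tbᵀ := by
      rw [Matrix.transpose_mul, Matrix.transpose_mul, Matrix.transpose_transpose,
        hMbs.eq, Matrix.mul_assoc]
    exact congrFun (congrFun h j) i
  have hGcol : ∀ i j : Fin n, n - d ≤ (j : ℕ) → (Tb * Mb * Tbᵀ) i j = 0 :=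
    fun i j hj => (hGsym i j).trans (hGrow j i hj)
  have hentry : ∀ i j : Fin n, (((T * M * Tᵀ) i j : ℤ) : F) = (Tb * Mb * Tbᵀ) i j := by
    intro i j
    rw [← hmap]
    rfl
  -- rank computations
  have hTdet : IsUnit Tb.det := by
    have h1 : Tb.det = ((T.det : ℤ) : F) := by
      rw [hTb, hcast, ← RingHom.mapMatrix_apply, ← RingHom.map_det]
    rw [h1]
    rcases hdet with h | h <;> rw [h]
    · simp
    · rw [Int.cast_neg, Int.cast_one]
      exact isUnit_one.neg
  have hTtdet : IsUnit (Tbᵀ).det := by rwa [Matrix.det_transpose]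
  have hrank : (Tb * Mb * Tbᵀ).rank = Mb.rank := by
    rw [Matrix.rank_mul_eq_left_of_isUnit_det Tbᵀ (Tb * Mb) hTtdet,
        Matrix.rank_mul_eq_right_of_isUnit_det Tb Mb hTdet]
  have hfr : Module.finrank F (Fin n → F) = n := by
    rw [Module.finrank_pi, Fintype.card_fin]
  have hn1 := LinearMap.finrank_range_add_finrank_ker (Matrix.mulVecLin Mb)
  have hn2 := LinearMap.finrank_range_add_finrank_ker (Matrix.mulVecLin (Tb * Mb * Tbᵀ))
  rw [hfr] at hn1 hn2
  have e1 : Mb.rank = Module.finrank F (LinearMap.range (Matrix.mulVecLin Mb)) := rfl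
  have e2 : (Tb * Mb * Tbᵀ).rank
      = Module.finrank F (LinearMap.range (Matrix.mulVecLin (Tb * Mb * Tbᵀ))) := rfl
  rw [e1, e2] at hrank
  have hdk : d = Module.finrank F (LinearMap.ker (Matrix.mulVecLin Mb)) := hd
  have hkerG : Module.finrank F (LinearMap.ker (Matrix.mulVecLin (Tb * Mb * Tbᵀ))) = d := by
    omega
  -- the upper left block of the reduction
  set Nb := (Tb * Mb * Tbᵀ).submatrix (Fin.castLE hrn) (Fin.castLE hrn) with hNb
  have hrd : (n - d) + d = n := by omega
  have hmemker : ∀ z : ↥(LinearMap.ker (Matrix.mulVecLin Nb)) × (Fin d → F),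
      interleave F (n - d) d n hrd ((z.1 : Fin (n - d) → F), z.2)
        ∈ LinearMap.ker (Matrix.mulVecLin (Tb * Mb * Tbᵀ)) := by
    intro z
    rw [LinearMap.mem_ker, Matrix.mulVecLin_apply]
    funext k
    show ∑ l, (Tb * Mb * Tbᵀ) k l
        * (interleave F (n - d) d n hrd ((z.1 : Fin (n - d) → F), z.2) l) = 0
    by_cases hk : (k : ℕ) < n - d
    · rw [sum_split hrn
        (fun l => (Tb * Mb * Tbᵀ) k l
          * (interleave F (n - d) d n hrd ((z.1 : Fin (n - d) → F), z.2) l))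
        (fun j hj => by
          show (Tb * Mb * Tbᵀ) k j * _ = 0
          rw [hGcol k j hj, zero_mul])]
      have hz := z.1.2
      rw [LinearMap.mem_ker, Matrix.mulVecLin_apply] at hz
      have hzk := congrFun hz ⟨(k : ℕ), hk⟩
      refine Eq.trans (Finset.sum_congr rfl fun j _ => ?_) hzk
      beta_reduce
      rw [interleave_applyA hrd _ (Fin.castLE hrn j) j.isLt]
      rfl
    · exact Finset.sum_eq_zero fun l _ => by rw [hGrow k l (by omega), zero_mul]
  let ι1 : (↥(LinearMap.ker (Matrix.mulVecLin Nb)) × (Fin d → F))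
      →ₗ[F] ((Fin (n - d) → F) × (Fin d → F)) :=
    (LinearMap.ker (Matrix.mulVecLin Nb)).subtype.prodMap LinearMap.id
  have hι1 : Function.Injective ι1 := by
    intro z w hzw
    have h1 : (ι1 z).1 = (ι1 w).1 := congrArg Prod.fst hzw
    have h2 : (ι1 z).2 = (ι1 w).2 := congrArg Prod.snd hzw
    exact Prod.ext (Subtype.ext h1) h2
  let ψ := LinearMap.codRestrict (LinearMap.ker (Matrix.mulVecLin (Tb * Mb * Tbᵀ)))
      ((interleave F (n - d) d n hrd).comp ι1) (fun z => hmemker z)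
  have hψ : Function.Injective ψ := by
    intro z w h
    have h2 : interleave F (n - d) d n hrd (ι1 z) = interleave F (n - d) d n hrd (ι1 w) :=
      congrArg Subtype.val h
    exact hι1 (interleave_injective hrd h2)
  have hle := LinearMap.finrank_le_finrank_of_injective hψ
  rw [hkerG, Module.finrank_prod] at hle
  have hfd : Module.finrank F (Fin d → F) = d := by
    rw [Module.finrank_pi, Fintype.card_fin]
  rw [hfd] at hle
  have h0 : Module.finrank F (LinearMap.ker (Matrix.mulVecLin Nb)) = 0 := by omega
  have hbot : LinearMap.ker (Matrix.mulVecLin Nb) = ⊥ := Submodule.finrank_eq_zero.mp h0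
  have hNdet : Nb.det ≠ 0 := by
    intro hdet0
    obtain ⟨v, hv0, hv⟩ := Matrix.exists_mulVec_eq_zero_iff.mpr hdet0
    have hvmem : v ∈ LinearMap.ker (Matrix.mulVecLin Nb) := by
      rw [LinearMap.mem_ker, Matrix.mulVecLin_apply]
      exact hv
    rw [hbot, Submodule.mem_bot] at hvmem
    exact hv0 hvmem
  refine ⟨hdn, T, hdet, ?_, ?_⟩
  · rw [← ZMod.intCast_zmod_eq_zero_iff_dvd]
    intro hc
    apply hNdet
    have hud : (((upperLeft (T * M * Tᵀ) (n - d) (Nat.sub_le n d)).det : ℤ) : F) = Nb.det := by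
      have h1 : (((upperLeft (T * M * Tᵀ) (n - d) (Nat.sub_le n d)).det : ℤ) : F)
          = ((upperLeft (T * M * Tᵀ) (n - d) (Nat.sub_le n d)).map (Int.cast : ℤ → F)).det :=
        RingHom.map_det (Int.castRingHom F) _
      rw [h1]
      have h2 : (upperLeft (T * M * Tᵀ) (n - d) (Nat.sub_le n d)).map (Int.cast : ℤ → F)
          = ((T * M * Tᵀ).map (Int.cast : ℤ → F)).submatrix (Fin.castLE hrn) (Fin.castLE hrn) :=
        rfl
      rw [h2, hmap, hNb]
    rw [← hud]
    exact hc
  · intro i j hij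
    rw [← ZMod.intCast_zmod_eq_zero_iff_dvd, hentry i j]
    rcases hij with h | h
    · exact hGrow i j h
    · exact hGcol i j h
end

section
/- Let p be an odd prime and let M be a symmetric n×n integer matrix. Suppose T₁ and T₂ are n×n integer matrices with det T₁ = ±1 and det T₂ = ±1, and r₁, r₂ ∈ {0,…,n} are such that, for each a ∈ {1,2}, the upper left r_a×r_a submatrix N_a of T_a·M·T_aᵀ has determinant not divisible by p while all entries of T_a·M·T_aᵀ outside of N_a are divisible by p. Then r₁ = r₂ and the Legendre symbols satisfy (det N₁ | p) = (det N₂ | p). -/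
open Matrix

lemma sum_trunc {K : Type*} [AddCommMonoid K] {n r : ℕ} (hr : r ≤ n) (f : Fin n → K)
    (h : ∀ k : Fin n, r ≤ (k : ℕ) → f k = 0) :
    ∑ k, f k = ∑ k : Fin r, f (Fin.castLE hr k) := by
  have h1 : ∑ k : Fin r, f (Fin.castLE hr k) =
      ∑ x ∈ Finset.univ.map (Fin.castLEEmb hr), f x := by
    rw [Finset.sum_map]
    rfl
  rw [h1]
  refine (Finset.sum_subset (Finset.subset_univ _) ?_).symm
  intro x _ hx
  refine h x ?_
  by_contra hlt
  push_neg at hlt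
  exact hx (Finset.mem_map.mpr ⟨⟨x, hlt⟩, Finset.mem_univ _, rfl⟩)

lemma key_s13 {K : Type*} [Field K] {n r₁ r₂ : ℕ} (hr₁ : r₁ ≤ n) (hr₂ : r₂ ≤ n)
    (A₁ A₂ B : Matrix (Fin n) (Fin n) K)
    (hB : B * A₁ * Bᵀ = A₂)
    (h1 : ∀ i j : Fin n, (r₁ ≤ (i : ℕ) ∨ r₁ ≤ (j : ℕ)) → A₁ i j = 0)
    (hN₂ : (A₂.submatrix (Fin.castLE hr₂) (Fin.castLE hr₂)).det ≠ 0) :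
    r₂ ≤ r₁ ∧ ∃ C : Matrix (Fin r₂) (Fin r₁) K,
      A₂.submatrix (Fin.castLE hr₂) (Fin.castLE hr₂) =
        C * A₁.submatrix (Fin.castLE hr₁) (Fin.castLE hr₁) * Cᵀ := by
  set C : Matrix (Fin r₂) (Fin r₁) K := B.submatrix (Fin.castLE hr₂) (Fin.castLE hr₁) with hC
  have heq : A₂.submatrix (Fin.castLE hr₂) (Fin.castLE hr₂) =
      C * A₁.submatrix (Fin.castLE hr₁) (Fin.castLE hr₁) * Cᵀ := by
    ext i j
    have hLHS : A₂ (Fin.castLE hr₂ i) (Fin.castLE hr₂ j) =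
        ∑ k : Fin n, ∑ l : Fin n,
          B (Fin.castLE hr₂ i) k * A₁ k l * B (Fin.castLE hr₂ j) l := by
      rw [← hB]
      simp only [Matrix.mul_apply, Matrix.transpose_apply, Finset.sum_mul]
      rw [Finset.sum_comm]
    have hRHS : (C * A₁.submatrix (Fin.castLE hr₁) (Fin.castLE hr₁) * Cᵀ) i j =
        ∑ k : Fin r₁, ∑ l : Fin r₁,
          B (Fin.castLE hr₂ i) (Fin.castLE hr₁ k) *
            A₁ (Fin.castLE hr₁ k) (Fin.castLE hr₁ l) *
              B (Fin.castLE hr₂ j) (Fin.castLE hr₁ l) := by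
      simp only [Matrix.mul_apply, Matrix.transpose_apply, Finset.sum_mul,
        Matrix.submatrix_apply, hC]
      rw [Finset.sum_comm]
    rw [Matrix.submatrix_apply, hLHS, hRHS,
      sum_trunc hr₁ _ (fun k hk => Finset.sum_eq_zero fun l _ => by
        rw [h1 k l (Or.inl hk)]; ring)]
    refine Finset.sum_congr rfl fun k _ => ?_
    exact sum_trunc hr₁ _ (fun l hl => by rw [h1 _ l (Or.inr hl)]; ring)
  refine ⟨?_, C, heq⟩
  have hrk : (A₂.submatrix (Fin.castLE hr₂) (Fin.castLE hr₂)).rank = r₂ := by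
    rw [Matrix.rank_of_isUnit _ ((Matrix.isUnit_iff_isUnit_det _).mpr
      (isUnit_iff_ne_zero.mpr hN₂)), Fintype.card_fin]
  calc r₂ = (A₂.submatrix (Fin.castLE hr₂) (Fin.castLE hr₂)).rank := hrk.symm
    _ = (C * (A₁.submatrix (Fin.castLE hr₁) (Fin.castLE hr₁) * Cᵀ)).rank := by
        rw [heq, Matrix.mul_assoc]
    _ ≤ C.rank := Matrix.rank_mul_le_left _ _
    _ ≤ r₁ := by simpa using C.rank_le_card_width

/-- Well-definedness of the singular determinant: if `T₁, T₂` are unimodular integer matrices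
such that, modulo the odd prime `p`, `T_a * M * T_aᵀ` is the block sum of an `r_a × r_a` matrix
`N_a` with `p ∤ det N_a` and a zero matrix, then `r₁ = r₂` and
`(det N₁ | p) = (det N₂ | p)`. -/
theorem stmt_13 (p n : ℕ) [Fact p.Prime] (hp2 : p ≠ 2)
    (M : Matrix (Fin n) (Fin n) ℤ) (hsymm : M.IsSymm)
    (T₁ T₂ : Matrix (Fin n) (Fin n) ℤ)
    (hT₁ : T₁.det = 1 ∨ T₁.det = -1) (hT₂ : T₂.det = 1 ∨ T₂.det = -1)
    (r₁ r₂ : ℕ) (hr₁ : r₁ ≤ n) (hr₂ : r₂ ≤ n)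
    (hN₁ : ¬ (p : ℤ) ∣ (upperLeft (T₁ * M * T₁ᵀ) r₁ hr₁).det)
    (hout₁ : ∀ i j : Fin n, (r₁ ≤ (i : ℕ) ∨ r₁ ≤ (j : ℕ)) → (p : ℤ) ∣ (T₁ * M * T₁ᵀ) i j)
    (hN₂ : ¬ (p : ℤ) ∣ (upperLeft (T₂ * M * T₂ᵀ) r₂ hr₂).det)
    (hout₂ : ∀ i j : Fin n, (r₂ ≤ (i : ℕ) ∨ r₂ ≤ (j : ℕ)) → (p : ℤ) ∣ (T₂ * M * T₂ᵀ) i j) :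
    r₁ = r₂ ∧
      legendreSym p (upperLeft (T₁ * M * T₁ᵀ) r₁ hr₁).det =
        legendreSym p (upperLeft (T₂ * M * T₂ᵀ) r₂ hr₂).det := by
  let φ : ℤ →+* ZMod p := Int.castRingHom (ZMod p)
  set A₁ : Matrix (Fin n) (Fin n) (ZMod p) := (T₁ * M * T₁ᵀ).map φ with hA₁
  set A₂ : Matrix (Fin n) (Fin n) (ZMod p) := (T₂ * M * T₂ᵀ).map φ with hA₂
  have hmapdet : ∀ (m : ℕ) (A : Matrix (Fin m) (Fin m) ℤ), (A.map φ).det = φ A.det :=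
    fun m A => (RingHom.map_det φ A).symm
  have hsub : ∀ (A : Matrix (Fin n) (Fin n) ℤ) (r : ℕ) (h : r ≤ n),
      (A.map φ).submatrix (Fin.castLE h) (Fin.castLE h) = (upperLeft A r h).map φ :=
    fun A r h => rfl
  have hzero : ∀ (a : ℤ), φ a = 0 ↔ (p : ℤ) ∣ a := fun a =>
    ZMod.intCast_zmod_eq_zero_iff_dvd a p
  have hdet₁ : (A₁.submatrix (Fin.castLE hr₁) (Fin.castLE hr₁)).det ≠ 0 := by
    rw [hsub, hmapdet, Ne, hzero]; exact hN₁
  have hdet₂ : (A₂.submatrix (Fin.castLE hr₂) (Fin.castLE hr₂)).det ≠ 0 := by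
    rw [hsub, hmapdet, Ne, hzero]; exact hN₂
  have hz₁ : ∀ i j : Fin n, (r₁ ≤ (i : ℕ) ∨ r₁ ≤ (j : ℕ)) → A₁ i j = 0 := by
    intro i j h; rw [hA₁, Matrix.map_apply, hzero]; exact hout₁ i j h
  have hz₂ : ∀ i j : Fin n, (r₂ ≤ (i : ℕ) ∨ r₂ ≤ (j : ℕ)) → A₂ i j = 0 := by
    intro i j h; rw [hA₂, Matrix.map_apply, hzero]; exact hout₂ i j h
  have hunit : ∀ (T : Matrix (Fin n) (Fin n) ℤ), T.det = 1 ∨ T.det = -1 →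
      IsUnit (T.map φ).det := by
    intro T hT
    rw [hmapdet]
    rcases hT with h | h <;> simp [h]
  have hU₁ := hunit T₁ hT₁
  have hU₂ := hunit T₂ hT₂
  set S₁ := T₁.map φ with hS₁def
  set S₂ := T₂.map φ with hS₂def
  have hS₁ : A₁ = S₁ * M.map φ * S₁ᵀ := by
    rw [hA₁, Matrix.map_mul, Matrix.map_mul, Matrix.transpose_map]
  have hS₂ : A₂ = S₂ * M.map φ * S₂ᵀ := by
    rw [hA₂, Matrix.map_mul, Matrix.map_mul, Matrix.transpose_map]
  have hB : ∀ (S S' : Matrix (Fin n) (Fin n) (ZMod p)), IsUnit S.det →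
      (S' * S⁻¹) * (S * M.map φ * Sᵀ) * (S' * S⁻¹)ᵀ = S' * M.map φ * S'ᵀ := by
    intro S S' hS
    have h1 : S⁻¹ * S = 1 := Matrix.nonsing_inv_mul _ hS
    have h2 : Sᵀ * (S⁻¹)ᵀ = 1 := by
      rw [← Matrix.transpose_mul, h1, Matrix.transpose_one]
    rw [Matrix.transpose_mul]
    calc (S' * S⁻¹) * (S * M.map φ * Sᵀ) * ((S⁻¹)ᵀ * S'ᵀ)
        = S' * ((S⁻¹ * S) * M.map φ * (Sᵀ * (S⁻¹)ᵀ)) * S'ᵀ := by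
          noncomm_ring
      _ = S' * M.map φ * S'ᵀ := by rw [h1, h2]; noncomm_ring
  have hB₁ : (S₂ * S₁⁻¹) * A₁ * (S₂ * S₁⁻¹)ᵀ = A₂ := by
    rw [hS₁, hS₂]; exact hB S₁ S₂ hU₁
  have hB₂ : (S₁ * S₂⁻¹) * A₂ * (S₁ * S₂⁻¹)ᵀ = A₁ := by
    rw [hS₁, hS₂]; exact hB S₂ S₁ hU₂
  obtain ⟨h21, C, hCeq⟩ := key_s13 hr₁ hr₂ A₁ A₂ _ hB₁ hz₁ hdet₂
  obtain ⟨h12, -⟩ := key_s13 hr₂ hr₁ A₂ A₁ _ hB₂ hz₂ hdet₁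
  have hr : r₁ = r₂ := le_antisymm h12 h21
  subst hr
  refine ⟨rfl, ?_⟩
  have hdetC : (A₂.submatrix (Fin.castLE hr₂) (Fin.castLE hr₂)).det =
      C.det ^ 2 * (A₁.submatrix (Fin.castLE hr₁) (Fin.castLE hr₁)).det := by
    rw [hCeq, Matrix.det_mul, Matrix.det_mul, Matrix.det_transpose]
    ring
  have hCne : C.det ≠ 0 := by
    intro h
    apply hdet₂
    rw [hdetC, h]
    ring
  unfold legendreSym
  have e1 : (((upperLeft (T₁ * M * T₁ᵀ) r₁ hr₁).det : ℤ) : ZMod p) =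
      (A₁.submatrix (Fin.castLE hr₁) (Fin.castLE hr₁)).det :=
    (hmapdet r₁ (upperLeft (T₁ * M * T₁ᵀ) r₁ hr₁)).symm
  have e2 : (((upperLeft (T₂ * M * T₂ᵀ) r₁ hr₂).det : ℤ) : ZMod p) =
      (A₂.submatrix (Fin.castLE hr₂) (Fin.castLE hr₂)).det :=
    (hmapdet r₁ (upperLeft (T₂ * M * T₂ᵀ) r₁ hr₂)).symm
  rw [e1, e2, hdetC, _root_.map_mul, map_pow, quadraticChar_sq_one hCne, one_mul]
end

section
/- Let p be an odd prime and let M be a symmetric n×n integer matrix with all diagonal entries even. Let M' be the (n+2)×(n+2) symmetric integer matrix obtained as the block sum of M and the hyperbolic block [[0,1],[1,0]]. Let d be the dimension over 𝔽_p of the kernel of M modulo p and μ = 1 plus the dimension over 𝔽₂ of the kernel of M modulo 2. Suppose T and T' are unimodular integer matrices such that modulo p, T·M·Tᵀ is the block sum of a square matrix N with p ∤ det N and a zero matrix, and T'·M'·T'ᵀ is the block sum of a square matrix N'' with p ∤ det N'' and a zero matrix. Then the dimension over 𝔽_p of the kernel of M' modulo p equals d, 1 plus the dimension over 𝔽₂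 of the kernel of M' modulo 2 equals μ, and the Legendre symbols satisfy ( (−1)^{d + (n+μ−1)/2}·det N | p ) = ( (−1)^{d + (n+μ+1)/2}·det N'' | p ). -/
open Matrix

/-- The `(n+2) × (n+2)` block sum of an `n × n` matrix `M` with the hyperbolic block
`[[0,1],[1,0]]`. -/
def stabilize {n : ℕ} (M : Matrix (Fin n) (Fin n) ℤ) :
    Matrix (Fin (n + 2)) (Fin (n + 2)) ℤ :=
  Matrix.reindex finSumFinEquiv finSumFinEquiv
    (Matrix.fromBlocks M 0 0 !![0, 1; 1, 0])

open Module LinearMap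

section AuxStab14
variable {K : Type*} [Field K]


lemma conj_fromBlocks {α β α' β' : Type*} [Fintype α] [Fintype β] [Fintype α'] [Fintype β']
    (C11 : Matrix α' α K) (C12 : Matrix α' β K) (C21 : Matrix β' α K) (C22 : Matrix β' β K)
    (B : Matrix α α K) :
    (fromBlocks C11 C12 C21 C22) * fromBlocks B 0 0 (0 : Matrix β β K) *
        (fromBlocks C11 C12 C21 C22)ᵀ =
      fromBlocks (C11 * B * C11ᵀ) (C11 * B * C21ᵀ) (C21 * B * C11ᵀ) (C21 * B * C21ᵀ) := by
  simp [Matrix.fromBlocks_multiply, Matrix.fromBlocks_transpose, Matrix.mul_assoc]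

def splitEq (r k n : ℕ) (h : r + k = n) : (Fin r ⊕ Fin k) ≃ Fin n :=
  finSumFinEquiv.trans (finCongr h)

lemma splitEq_inl {r k n : ℕ} (h : r + k = n) (hr : r ≤ n) (a : Fin r) :
    splitEq r k n h (Sum.inl a) = Fin.castLE hr a := by
  apply Fin.ext; simp [splitEq]

lemma splitEq_inr_val {r k n : ℕ} (h : r + k = n) (b : Fin k) :
    ((splitEq r k n h (Sum.inr b)) : ℕ) = r + b := by
  simp [splitEq]

lemma blockform (q : ℕ) [NeZero q] {n r k : ℕ} (h : r + k = n) (hr : r ≤ n)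
    (X : Matrix (Fin n) (Fin n) ℤ)
    (hout : ∀ i j : Fin n, (r ≤ (i : ℕ) ∨ r ≤ (j : ℕ)) → (q : ℤ) ∣ X i j) :
    (X.map (Int.cast : ℤ → ZMod q)).submatrix (splitEq r k n h) (splitEq r k n h) =
      fromBlocks ((upperLeft X r hr).map (Int.cast : ℤ → ZMod q)) 0 0 0 := by
  ext i j
  rcases i with a | a <;> rcases j with b | b
  · simp only [Matrix.submatrix_apply, Matrix.map_apply, fromBlocks_apply₁₁, upperLeft,
      splitEq_inl h hr]
  · simp only [Matrix.submatrix_apply, Matrix.map_apply, fromBlocks_apply₁₂, Matrix.zero_apply]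
    rw [ZMod.intCast_zmod_eq_zero_iff_dvd]
    exact hout _ _ (Or.inr (by rw [splitEq_inr_val]; omega))
  · simp only [Matrix.submatrix_apply, Matrix.map_apply, fromBlocks_apply₂₁, Matrix.zero_apply]
    rw [ZMod.intCast_zmod_eq_zero_iff_dvd]
    exact hout _ _ (Or.inl (by rw [splitEq_inr_val]; omega))
  · simp only [Matrix.submatrix_apply, Matrix.map_apply, fromBlocks_apply₂₂, Matrix.zero_apply]
    rw [ZMod.intCast_zmod_eq_zero_iff_dvd]
    exact hout _ _ (Or.inl (by rw [splitEq_inr_val]; omega))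

lemma finrank_submodule_prod {M N : Type*} [AddCommGroup M] [Module K M]
    [AddCommGroup N] [Module K N] [FiniteDimensional K M] [FiniteDimensional K N]
    (p : Submodule K M) (q : Submodule K N) :
    finrank K (p.prod q) = finrank K p + finrank K q := by
  have e : (p.prod q) ≃ₗ[K] p × q :=
    { toFun := fun x => (⟨x.1.1, x.2.1⟩, ⟨x.1.2, x.2.2⟩)
      invFun := fun y => ⟨(y.1.1, y.2.1), ⟨y.1.2, y.2.2⟩⟩
      left_inv := fun _ => rfl
      right_inv := fun _ => rfl
      map_add' := fun _ _ => rfl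
      map_smul' := fun _ _ => rfl }
  rw [e.finrank_eq, Module.finrank_prod]

lemma mulVecLin_fromBlocks_diag {α β : Type*} [Fintype α] [Fintype β]
    (A : Matrix α α K) (D : Matrix β β K) :
    (Matrix.fromBlocks A 0 0 D).mulVecLin =
      ((LinearEquiv.sumArrowLequivProdArrow α β K K).symm.toLinearMap ∘ₗ
        (A.mulVecLin.prodMap D.mulVecLin)) ∘ₗ
        (LinearEquiv.sumArrowLequivProdArrow α β K K).toLinearMap := by
  apply LinearMap.ext; intro x; funext i
  cases i <;>
    simp [Matrix.fromBlocks_mulVec, Matrix.zero_mulVec,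
      LinearEquiv.sumArrowLequivProdArrow, Equiv.sumArrowEquivProdArrow]

lemma finrank_ker_fromBlocks_diag {α β : Type*} [Fintype α] [Fintype β]
    (A : Matrix α α K) (D : Matrix β β K) :
    finrank K (ker (Matrix.fromBlocks A 0 0 D).mulVecLin) =
      finrank K (ker A.mulVecLin) + finrank K (ker D.mulVecLin) := by
  rw [mulVecLin_fromBlocks_diag, LinearMap.ker_comp, LinearMap.ker_comp,
    LinearEquiv.ker, Submodule.comap_bot, LinearMap.ker_prodMap]
  rw [Submodule.comap_equiv_eq_map_symm, LinearEquiv.finrank_map_eq,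
    finrank_submodule_prod]

lemma rank_add_finrank_ker {ι : Type*} [Fintype ι] (A : Matrix ι ι K) :
    A.rank + finrank K (ker A.mulVecLin) = Fintype.card ι := by
  have := LinearMap.finrank_range_add_finrank_ker A.mulVecLin
  simpa [Matrix.rank, Module.finrank_pi] using this

lemma rank_fromBlocks_diag {α β : Type*} [Fintype α] [Fintype β]
    (A : Matrix α α K) (D : Matrix β β K) :
    (Matrix.fromBlocks A 0 0 D).rank = A.rank + D.rank := by
  have h1 := rank_add_finrank_ker (Matrix.fromBlocks A 0 0 D)
  have h2 := rank_add_finrank_ker A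
  have h3 := rank_add_finrank_ker D
  rw [finrank_ker_fromBlocks_diag] at h1
  simp only [Fintype.card_sum] at h1
  omega

lemma hyp_map {R : Type*} [CommRing R] :
    ((!![0, 1; 1, 0] : Matrix (Fin 2) (Fin 2) ℤ).map (Int.cast : ℤ → R)) = !![0, 1; 1, 0] := by
  ext i j; fin_cases i <;> fin_cases j <;> simp

lemma stabilize_map {R : Type*} [CommRing R] {n : ℕ} (M : Matrix (Fin n) (Fin n) ℤ) :
    (stabilize M).map (Int.cast : ℤ → R) =
      (fromBlocks (M.map (Int.cast : ℤ → R)) 0 0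
        (!![0, 1; 1, 0] : Matrix (Fin 2) (Fin 2) R)).submatrix
        finSumFinEquiv.symm finSumFinEquiv.symm := by
  unfold stabilize
  rw [reindex_apply, ← Matrix.submatrix_map, Matrix.fromBlocks_map,
    Matrix.map_zero _ Int.cast_zero, Matrix.map_zero _ Int.cast_zero, hyp_map]

lemma map_int_mul {R : Type*} [CommRing R] {m k l : Type*} [Fintype k]
    (A : Matrix m k ℤ) (B : Matrix k l ℤ) :
    ((A * B).map (Int.cast : ℤ → R)) = A.map Int.cast * B.map Int.cast := by
  have := Matrix.map_mul (L := A) (M := B) (f := Int.castRingHom R)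
  exact this

lemma map_int_det {R : Type*} [CommRing R] {m : Type*} [Fintype m] [DecidableEq m]
    (A : Matrix m m ℤ) : (A.map (Int.cast : ℤ → R)).det = (A.det : R) := by
  have := RingHom.map_det (Int.castRingHom R) A
  simpa using this.symm

lemma rank_blockform (q : ℕ) [Fact q.Prime] {n r k : ℕ} (h : r + k = n) (hr : r ≤ n)
    (X : Matrix (Fin n) (Fin n) ℤ)
    (hN : ¬ (q : ℤ) ∣ (upperLeft X r hr).det)
    (hout : ∀ i j : Fin n, (r ≤ (i : ℕ) ∨ r ≤ (j : ℕ)) → (q : ℤ) ∣ X i j) :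
    (X.map (Int.cast : ℤ → ZMod q)).rank = r := by
  have hs := blockform q h hr X hout
  have hdet : ((upperLeft X r hr).map (Int.cast : ℤ → ZMod q)).det ≠ 0 := by
    rw [map_int_det, Ne, ZMod.intCast_zmod_eq_zero_iff_dvd]; exact hN
  calc (X.map (Int.cast : ℤ → ZMod q)).rank
      = ((X.map (Int.cast : ℤ → ZMod q)).submatrix (splitEq r k n h) (splitEq r k n h)).rank :=
        (Matrix.rank_submatrix _ _ _).symm
    _ = (fromBlocks ((upperLeft X r hr).map (Int.cast : ℤ → ZMod q)) 0 0
          (0 : Matrix (Fin k) (Fin k) (ZMod q))).rank := by rw [hs]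
    _ = r := by
        rw [rank_fromBlocks_diag, Matrix.rank_zero,
          Matrix.rank_of_isUnit _ ((Matrix.isUnit_iff_isUnit_det _).mpr
            (isUnit_iff_ne_zero.mpr hdet)), Fintype.card_fin, add_zero]

lemma rank_stab_map (q : ℕ) [Fact q.Prime] {n : ℕ} (M : Matrix (Fin n) (Fin n) ℤ) :
    ((stabilize M).map (Int.cast : ℤ → ZMod q)).rank
      = (M.map (Int.cast : ℤ → ZMod q)).rank + 2 := by
  rw [stabilize_map, Matrix.rank_submatrix, rank_fromBlocks_diag]
  congr 1
  rw [Matrix.rank_of_isUnit _ ((Matrix.isUnit_iff_isUnit_det _).mpr ?_), Fintype.card_fin]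
  rw [show (!![0, 1; 1, 0] : Matrix (Fin 2) (Fin 2) (ZMod q)).det = -1 by
    simp [Matrix.det_fin_two_of]]
  exact isUnit_one.neg

lemma kerDim_add_rank (q : ℕ) [Fact q.Prime] {n : ℕ} (M : Matrix (Fin n) (Fin n) ℤ) :
    (M.map (Int.cast : ℤ → ZMod q)).rank + kerDimModP q M = n := by
  unfold kerDimModP
  simpa using rank_add_finrank_ker (M.map (Int.cast : ℤ → ZMod q))

lemma submatrix_conj_equiv {ι κ : Type*} [Fintype ι] [Fintype κ] [DecidableEq ι] [DecidableEq κ]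
    (X Y : Matrix ι ι K) (e f : κ ≃ ι) :
    (X * Y * Xᵀ).submatrix f f = (X.submatrix f e) * (Y.submatrix e e) * (X.submatrix f e)ᵀ := by
  rw [Matrix.mul_assoc, ← Matrix.submatrix_mul_equiv X (Y * Xᵀ) f e f,
    ← Matrix.submatrix_mul_equiv Y Xᵀ e e f, ← Matrix.transpose_submatrix, Matrix.mul_assoc]

end AuxStab14

/-- Invariance of the singular determinant under the stabilization
`M ↦ M ⊕ [[0,1],[1,0]]`: with `d`, `μ` the mod-`p` kernel dimension and `1 +` the mod-`2`
kernel dimension of `M`, and `T`, `T'` unimodular matrices bringing `M` and its stabilization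
`M'` into block form modulo the odd prime `p`, the corresponding quantities for `M'` are `d`
and `μ`, and `((-1)^(d + (n+μ-1)/2) · det N | p) = ((-1)^(d + (n+μ+1)/2) · det N'' | p)`. -/
theorem stmt_14 (p n : ℕ) [Fact p.Prime] (hp2 : p ≠ 2)
    (M : Matrix (Fin n) (Fin n) ℤ) (hsymm : M.IsSymm) (hdiag : ∀ i, Even (M i i))
    (d μ : ℕ) (hd : d = kerDimModP p M) (hμ : μ = 1 + kerDimModP 2 M)
    (T : Matrix (Fin n) (Fin n) ℤ) (hT : T.det = 1 ∨ T.det = -1)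
    (r : ℕ) (hr : r ≤ n)
    (hN : ¬ (p : ℤ) ∣ (upperLeft (T * M * Tᵀ) r hr).det)
    (hout : ∀ i j : Fin n, (r ≤ (i : ℕ) ∨ r ≤ (j : ℕ)) → (p : ℤ) ∣ (T * M * Tᵀ) i j)
    (T' : Matrix (Fin (n + 2)) (Fin (n + 2)) ℤ) (hT' : T'.det = 1 ∨ T'.det = -1)
    (r' : ℕ) (hr' : r' ≤ n + 2)
    (hN'' : ¬ (p : ℤ) ∣ (upperLeft (T' * stabilize M * T'ᵀ) r' hr').det)
    (hout' : ∀ i j : Fin (n + 2), (r' ≤ (i : ℕ) ∨ r' ≤ (j : ℕ)) →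
      (p : ℤ) ∣ (T' * stabilize M * T'ᵀ) i j) :
    kerDimModP p (stabilize M) = d ∧
    1 + kerDimModP 2 (stabilize M) = μ ∧
    legendreSym p ((-1) ^ (d + (n + μ - 1) / 2) * (upperLeft (T * M * Tᵀ) r hr).det) =
      legendreSym p ((-1) ^ (d + (n + μ + 1) / 2) *
        (upperLeft (T' * stabilize M * T'ᵀ) r' hr').det) := by
  haveI hf2 : Fact (Nat.Prime 2) := ⟨Nat.prime_two⟩
  have hk : r + (n - r) = n := by omega
  have hk' : (r + 2) + (n - r) = n + 2 := by omega
  have hTdet : IsUnit ((T.map (Int.cast : ℤ → ZMod p)).det) := by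
    rw [map_int_det]; rcases hT with h | h <;> rw [h] <;> simp
  have hT'det : IsUnit ((T'.map (Int.cast : ℤ → ZMod p)).det) := by
    rw [map_int_det]; rcases hT' with h | h <;> rw [h] <;> simp
  have hmapTMT : ((T * M * Tᵀ).map (Int.cast : ℤ → ZMod p)) =
      T.map Int.cast * M.map Int.cast * (T.map Int.cast)ᵀ := by
    rw [map_int_mul, map_int_mul, Matrix.transpose_map]
    rfl
  have hmapT' : ((T' * stabilize M * T'ᵀ).map (Int.cast : ℤ → ZMod p)) =
      T'.map Int.cast * (stabilize M).map Int.cast * (T'.map Int.cast)ᵀ := by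
    rw [map_int_mul, map_int_mul, Matrix.transpose_map]
    rfl
  have hrankM : ((M.map (Int.cast : ℤ → ZMod p))).rank = r := by
    have h1 : ((T * M * Tᵀ).map (Int.cast : ℤ → ZMod p)).rank = r :=
      rank_blockform p hk hr _ hN hout
    rw [hmapTMT] at h1
    rwa [Matrix.rank_mul_eq_left_of_isUnit_det _ _ (by rwa [Matrix.det_transpose]),
      Matrix.rank_mul_eq_right_of_isUnit_det _ _ hTdet] at h1
  have hrankS : ((stabilize M).map (Int.cast : ℤ → ZMod p)).rank = r + 2 := by
    rw [rank_stab_map, hrankM]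
  have hrr' : r' = r + 2 := by
    have hkk : r' + (n + 2 - r') = n + 2 := by omega
    have h1 : ((T' * stabilize M * T'ᵀ).map (Int.cast : ℤ → ZMod p)).rank = r' :=
      rank_blockform p hkk hr' _ hN'' hout'
    rw [hmapT', Matrix.rank_mul_eq_left_of_isUnit_det _ _ (by rwa [Matrix.det_transpose]),
      Matrix.rank_mul_eq_right_of_isUnit_det _ _ hT'det, hrankS] at h1
    omega
  subst hrr'
  have hker1 : kerDimModP p (stabilize M) = d := by
    have e1 := kerDim_add_rank p M
    have e2 := kerDim_add_rank p (stabilize M)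
    omega
  have hker2 : 1 + kerDimModP 2 (stabilize M) = μ := by
    have e1 := kerDim_add_rank 2 M
    have e2 := kerDim_add_rank 2 (stabilize M)
    have e3 := rank_stab_map 2 M
    omega
  refine ⟨hker1, hker2, ?_⟩

  -- Part 3
  set K := ZMod p with hKdef
  set Tb : Matrix (Fin n) (Fin n) K := T.map Int.cast with hTbdef
  set Mb : Matrix (Fin n) (Fin n) K := M.map (Int.cast : ℤ → K) with hMbdef
  set T'b : Matrix (Fin (n+2)) (Fin (n+2)) K := T'.map Int.cast with hT'bdef
  set Sb : Matrix (Fin (n+2)) (Fin (n+2)) K := (stabilize M).map (Int.cast : ℤ → K) with hSbdef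
  set Nb : Matrix (Fin r) (Fin r) K :=
    (upperLeft (T * M * Tᵀ) r hr).map (Int.cast : ℤ → K) with hNbdef
  set N2b : Matrix (Fin (r+2)) (Fin (r+2)) K :=
    (upperLeft (T' * stabilize M * T'ᵀ) (r+2) hr').map (Int.cast : ℤ → K) with hN2bdef
  set e1 : (Fin r ⊕ Fin (n - r)) ≃ Fin n := splitEq r (n-r) n hk with he1def
  set E2 : (Fin (r+2) ⊕ Fin (n - r)) ≃ Fin (n+2) := splitEq (r+2) (n-r) (n+2) hk' with hE2def
  set g : (Fin r ⊕ Fin 2) ≃ Fin (r+2) := splitEq r 2 (r+2) rfl with hgdef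
  set fse : (Fin n ⊕ Fin 2) ≃ Fin (n+2) := finSumFinEquiv with hfsedef
  set sigma0 : ((Fin r ⊕ Fin 2) ⊕ Fin (n - r)) ≃ (Fin n ⊕ Fin 2) :=
    (Equiv.sumAssoc (Fin r) (Fin 2) (Fin (n-r))).trans
      ((Equiv.sumCongr (Equiv.refl (Fin r)) (Equiv.sumComm (Fin 2) (Fin (n-r)))).trans
        (((Equiv.sumAssoc (Fin r) (Fin (n-r)) (Fin 2)).symm).trans
          (Equiv.sumCongr e1 (Equiv.refl (Fin 2))))) with hsigma0def
  set sigma : ((Fin r ⊕ Fin 2) ⊕ Fin (n - r)) ≃ Fin (n+2) := sigma0.trans fse with hsigmadef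
  set e2 : ((Fin r ⊕ Fin 2) ⊕ Fin (n - r)) ≃ Fin (n+2) :=
    (Equiv.sumCongr g (Equiv.refl (Fin (n-r)))).trans E2 with he2def
  -- block forms
  have hA : (Tb * Mb * Tbᵀ) = (fromBlocks Nb 0 0 0).submatrix e1.symm e1.symm := by
    have h1 := blockform p hk hr (T * M * Tᵀ) hout
    rw [← hmapTMT, ← h1, Matrix.submatrix_submatrix]
    simp [he1def]
  have hB : (T'b * Sb * T'bᵀ) = (fromBlocks N2b 0 0 0).submatrix E2.symm E2.symm := by
    have h1 := blockform p hk' hr' (T' * stabilize M * T'ᵀ) hout'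
    rw [← hmapT', ← h1, Matrix.submatrix_submatrix]
    simp [hE2def]
  have hMbeq : Mb = Tb⁻¹ * ((fromBlocks Nb 0 0 0).submatrix e1.symm e1.symm) * Tb⁻¹ᵀ := by
    have hTT : Tb⁻¹ * (Tb * Mb * Tbᵀ) * (Tbᵀ)⁻¹ = Mb := by
      rw [show Tb⁻¹ * (Tb * Mb * Tbᵀ) * (Tbᵀ)⁻¹
          = (Tb⁻¹ * Tb) * Mb * (Tbᵀ * (Tbᵀ)⁻¹) by noncomm_ring,
        Matrix.nonsing_inv_mul _ hTdet,
        Matrix.mul_nonsing_inv _ (by rwa [Matrix.det_transpose]), one_mul, mul_one]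
    rw [← hTT, hA, Matrix.transpose_nonsing_inv]
  have hB2 : (T'b * Sb * T'bᵀ).submatrix e2 e2 = fromBlocks (N2b.submatrix g g) 0 0 0 := by
    rw [hB]
    ext x y
    rcases x with x | x <;> rcases y with y | y <;>
      simp [he2def, Matrix.submatrix_apply]
  set U : Matrix (Fin n ⊕ Fin 2) (Fin n ⊕ Fin 2) K :=
    fromBlocks Tb⁻¹ 0 0 (1 : Matrix (Fin 2) (Fin 2) K) with hUdef
  set G0 : Matrix (Fin n ⊕ Fin 2) (Fin n ⊕ Fin 2) K :=
    fromBlocks ((fromBlocks Nb 0 0 0).submatrix e1.symm e1.symm) 0 0 !![0,1;1,0] with hG0def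
  have hGm : fromBlocks Mb 0 0 (!![0,1;1,0] : Matrix (Fin 2) (Fin 2) K) = U * G0 * Uᵀ := by
    rw [hMbeq, hUdef, hG0def]
    simp [Matrix.fromBlocks_multiply, Matrix.fromBlocks_transpose, Matrix.mul_assoc]
  have hG0sub : G0.submatrix sigma0 sigma0
      = fromBlocks (fromBlocks Nb 0 0 !![0,1;1,0]) 0 0
          (0 : Matrix (Fin (n-r)) (Fin (n-r)) K) := by
    ext x y
    rcases x with (x | x) | x <;> rcases y with (y | y) | y <;>
      simp [hG0def, hsigma0def, Matrix.submatrix_apply]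
  have hSbsub : Sb.submatrix sigma sigma =
      (U.submatrix sigma0 sigma0) * (fromBlocks (fromBlocks Nb 0 0 !![0,1;1,0]) 0 0 0)
        * (U.submatrix sigma0 sigma0)ᵀ := by
    have hstab : Sb = (fromBlocks Mb 0 0 (!![0,1;1,0] : Matrix (Fin 2) (Fin 2) K)).submatrix
        fse.symm fse.symm := stabilize_map M
    have hcomp : (⇑fse.symm ∘ ⇑sigma) = ⇑sigma0 := by
      funext x; simp [hsigmadef]
    rw [hstab, Matrix.submatrix_submatrix, hcomp, hGm,
      submatrix_conj_equiv U G0 sigma0 sigma0, hG0sub]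
  set C : Matrix ((Fin r ⊕ Fin 2) ⊕ Fin (n-r)) ((Fin r ⊕ Fin 2) ⊕ Fin (n-r)) K :=
    (T'b.submatrix e2 sigma) * (U.submatrix sigma0 sigma0) with hCdef
  have hfinal : fromBlocks (N2b.submatrix g g) 0 0 0 =
      C * (fromBlocks (fromBlocks Nb 0 0 !![0,1;1,0]) 0 0 0) * Cᵀ := by
    rw [← hB2, submatrix_conj_equiv T'b Sb sigma e2, hSbsub, hCdef]
    simp only [Matrix.transpose_mul, Matrix.mul_assoc]
  have hextract : N2b.submatrix g g =
      C.toBlocks₁₁ * (fromBlocks Nb 0 0 !![0,1;1,0]) * C.toBlocks₁₁ᵀ := by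
    rw [← Matrix.fromBlocks_toBlocks C, conj_fromBlocks] at hfinal
    have := congrArg Matrix.toBlocks₁₁ hfinal
    simpa [Matrix.toBlocks_fromBlocks₁₁] using this
  have hdetB : (fromBlocks Nb 0 0 (!![0,1;1,0] : Matrix (Fin 2) (Fin 2) K)).det
      = Nb.det * (-1) := by
    rw [Matrix.det_fromBlocks_zero₂₁]
    congr 1
    simp [Matrix.det_fin_two_of]
  have hdet2 : N2b.det = C.toBlocks₁₁.det * (Nb.det * (-1)) * C.toBlocks₁₁.det := by
    rw [← Matrix.det_submatrix_equiv_self g N2b, hextract, Matrix.det_mul, Matrix.det_mul,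
      Matrix.det_transpose, hdetB]
  have hN2ne : N2b.det ≠ 0 := by
    rw [map_int_det, Ne, ZMod.intCast_zmod_eq_zero_iff_dvd]
    exact hN''
  have hC11 : C.toBlocks₁₁.det ≠ 0 := by
    intro h0
    rw [h0] at hdet2
    simp at hdet2
    exact hN2ne hdet2
  have hmu1 : 1 ≤ μ := by omega
  have hEE : d + (n + μ + 1) / 2 = (d + (n + μ - 1) / 2) + 1 := by omega
  rw [hEE]
  unfold legendreSym
  have harg : ((((-1 : ℤ) ^ ((d + (n + μ - 1) / 2) + 1) *
        (upperLeft (T' * stabilize M * T'ᵀ) (r+2) hr').det : ℤ)) : K)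
      = (((-1 : ℤ) ^ (d + (n + μ - 1) / 2) * (upperLeft (T * M * Tᵀ) r hr).det : ℤ) : K)
        * (C.toBlocks₁₁.det) ^ 2 := by
    rw [Int.cast_mul, Int.cast_mul, Int.cast_pow, Int.cast_pow, Int.cast_neg, Int.cast_one]
    rw [← map_int_det (upperLeft (T' * stabilize M * T'ᵀ) (r+2) hr'), ← hN2bdef, hdet2,
      ← map_int_det (upperLeft (T * M * Tᵀ) r hr), ← hNbdef]
    ring
  rw [harg, _root_.map_mul, quadraticChar_sq_one' hC11, mul_one]
end
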